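/- The element ν = (105 - 33√13 - 45√7 + 11√91)/2 of Q(√7,√13) satisfies ν² = (1574 + 165√91)·(8 - 3√7). -/
import Mathlib


/-- In F = ℚ(√7,√13) with √91 = √7·√13, the element
ν = (105 - 33√13 - 45√7 + 11√91)/2 satisfies ν² = ε₉₁ · ε₇,
where ε₉₁ = 1574 + 165√91 and ε₇ = 8 - 3√7. -/
theorem nu_sq_eq_eps91_mul_eps7 :
    let s7 : ℝ := Real.sqrt 7
    let s13 : ℝ := Real.sqrt 13
    let s91 : ℝ := s7 * s13
    ((105 - 33 * s13 - 45 * s7 + 11 * s91) / 2) ^ 2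
      = (1574 + 165 * s91) * (8 - 3 * s7) := by
  have h7 : Real.sqrt 7 ^ 2 = 7 := Real.sq_sqrt (by norm_num)
  have h13 : Real.sqrt 13 ^ 2 = 13 := Real.sq_sqrt (by norm_num)
  intro s7 s13 s91
  simp only [s7, s13, s91]
  linear_combination ((121 * Real.sqrt 13 ^ 2 + 990 * Real.sqrt 13 + 2025) / 4) * h7
    + ((1936 - 726 * Real.sqrt 7) / 4) * h13
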